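/- Let L be a laminar family of tight sets of a circulation x > 0 on a strongly connected digraph, S ∈ L with strongly connected components S₁,…,S_ℓ (topologically ordered) of G[S]. Then for each i, L ∪ {S_i} is a laminar family. -/

import Mathlib

open Finset

variable {V : Type*}

/-- Edges of `E` entering the vertex set `S`. -/
def dIn [DecidableEq V] (E : Finset (V × V)) (S : Finset V) : Finset (V × V) :=
  E.filter (fun e => e.1 ∉ S ∧ e.2 ∈ S)

/-- Edges of `E` leaving the vertex set `S`. -/
def dOut [DecidableEq V] (E : Finset (V × V)) (S : Finset V) : Finset (V × V) :=
  E.filter (fun e => e.1 ∈ S ∧ e.2 ∉ S)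

section helpers

variable [DecidableEq V] [Fintype V] (E : Finset (V × V)) (x : V × V → ℝ)

/-- Total weight of edges from `X` to `Y`. -/
def Fs (X Y : Finset V) : ℝ := ∑ e ∈ E.filter (fun e => e.1 ∈ X ∧ e.2 ∈ Y), x e

lemma Fs_nonneg (hpos : ∀ e ∈ E, 0 < x e) (X Y : Finset V) : 0 ≤ Fs E x X Y :=
  Finset.sum_nonneg fun e he => le_of_lt (hpos e (Finset.filter_subset _ _ he))

lemma Fs_mono (hpos : ∀ e ∈ E, 0 < x e) {X Y X' Y' : Finset V}
    (hX : X ⊆ X') (hY : Y ⊆ Y') : Fs E x X Y ≤ Fs E x X' Y' := by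
  apply Finset.sum_le_sum_of_subset_of_nonneg
  · intro e he
    simp only [Finset.mem_filter] at he ⊢
    exact ⟨he.1, hX he.2.1, hY he.2.2⟩
  · intro e he _
    exact le_of_lt (hpos e (Finset.filter_subset _ _ he))

lemma Fs_split_right (X Y Z : Finset V) :
    Fs E x X Y = Fs E x X (Y ∩ Z) + Fs E x X (Y \ Z) := by
  unfold Fs
  rw [← Finset.sum_filter_add_sum_filter_not
      (E.filter (fun e => e.1 ∈ X ∧ e.2 ∈ Y)) (fun e => e.2 ∈ Z)]
  congr 1
  · rw [Finset.filter_filter]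
    refine Finset.sum_congr (Finset.filter_congr fun e _ => ?_) fun _ _ => rfl
    simp only [Finset.mem_inter]
    tauto
  · rw [Finset.filter_filter]
    refine Finset.sum_congr (Finset.filter_congr fun e _ => ?_) fun _ _ => rfl
    simp only [Finset.mem_sdiff]
    tauto

lemma Fs_split_left (X Y Z : Finset V) :
    Fs E x X Y = Fs E x (X ∩ Z) Y + Fs E x (X \ Z) Y := by
  unfold Fs
  rw [← Finset.sum_filter_add_sum_filter_not
      (E.filter (fun e => e.1 ∈ X ∧ e.2 ∈ Y)) (fun e => e.1 ∈ Z)]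
  congr 1
  · rw [Finset.filter_filter]
    refine Finset.sum_congr (Finset.filter_congr fun e _ => ?_) fun _ _ => rfl
    simp only [Finset.mem_inter]
    tauto
  · rw [Finset.filter_filter]
    refine Finset.sum_congr (Finset.filter_congr fun e _ => ?_) fun _ _ => rfl
    simp only [Finset.mem_sdiff]
    tauto

lemma Fs_zero {X Y : Finset V} (h : ∀ e ∈ E, e.1 ∈ X → e.2 ∈ Y → False) :
    Fs E x X Y = 0 := by
  unfold Fs
  rw [Finset.filter_false_of_mem, Finset.sum_empty]
  exact fun e he hc => h e he hc.1 hc.2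

lemma Fs_pos (hpos : ∀ e ∈ E, 0 < x e) {X Y : Finset V}
    (h : ∃ e ∈ E, e.1 ∈ X ∧ e.2 ∈ Y) : 0 < Fs E x X Y := by
  obtain ⟨e, he, h1, h2⟩ := h
  apply Finset.sum_pos
  · intro i hi
    exact hpos i (Finset.filter_subset _ _ hi)
  · exact ⟨e, Finset.mem_filter.2 ⟨he, h1, h2⟩⟩

lemma Fs_total_left (T : Finset V) :
    ∑ e ∈ E.filter (fun e => e.1 ∈ T), x e = Fs E x T T + Fs E x T Tᶜ := by
  have h : Fs E x T univ = ∑ e ∈ E.filter (fun e => e.1 ∈ T), x e := by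
    unfold Fs
    refine Finset.sum_congr (Finset.filter_congr fun e _ => ?_) fun _ _ => rfl
    simp
  rw [← h, Fs_split_right E x T univ T, Finset.univ_inter,
    ← Finset.compl_eq_univ_sdiff]

lemma Fs_total_right (T : Finset V) :
    ∑ e ∈ E.filter (fun e => e.2 ∈ T), x e = Fs E x T T + Fs E x Tᶜ T := by
  have h : Fs E x univ T = ∑ e ∈ E.filter (fun e => e.2 ∈ T), x e := by
    unfold Fs
    refine Finset.sum_congr (Finset.filter_congr fun e _ => ?_) fun _ _ => rfl
    simp
  rw [← h, Fs_split_left E x univ T T, Finset.univ_inter,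
    ← Finset.compl_eq_univ_sdiff]

lemma Fs_conserv
    (hcirc : ∀ v : V, ∑ e ∈ E.filter (fun e => e.1 = v), x e
        = ∑ e ∈ E.filter (fun e => e.2 = v), x e)
    (T : Finset V) : Fs E x Tᶜ T = Fs E x T Tᶜ := by
  have hg : ∀ (g : V × V → V), ∑ e ∈ E.filter (fun e => g e ∈ T), x e
      = ∑ v ∈ T, ∑ e ∈ E.filter (fun e => g e = v), x e := by
    intro g
    calc ∑ e ∈ E.filter (fun e => g e ∈ T), x e
        = ∑ e ∈ E, if g e ∈ T then x e else 0 := Finset.sum_filter _ _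
      _ = ∑ e ∈ E, ∑ v ∈ T, if g e = v then x e else 0 := by
          refine Finset.sum_congr rfl fun e _ => ?_
          rw [Finset.sum_ite_eq T (g e) (fun _ => x e)]
      _ = ∑ v ∈ T, ∑ e ∈ E, if g e = v then x e else 0 := Finset.sum_comm
      _ = ∑ v ∈ T, ∑ e ∈ E.filter (fun e => g e = v), x e := by
          refine Finset.sum_congr rfl fun v _ => (Finset.sum_filter _ _).symm
  have h2 : ∑ e ∈ E.filter (fun e => e.1 ∈ T), x e
      = ∑ e ∈ E.filter (fun e => e.2 ∈ T), x e := by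
    rw [hg (fun e => e.1), hg (fun e => e.2)]
    exact Finset.sum_congr rfl fun v _ => hcirc v
  rw [Fs_total_left, Fs_total_right] at h2
  linarith

lemma dIn_sum (T : Finset V) : ∑ e ∈ dIn E T, x e = Fs E x Tᶜ T := by
  unfold dIn Fs
  refine Finset.sum_congr (Finset.filter_congr fun e _ => ?_) fun _ _ => rfl
  simp

lemma dOut_sum (T : Finset V) : ∑ e ∈ dOut E T, x e = Fs E x T Tᶜ := by
  unfold dOut Fs
  refine Finset.sum_congr (Finset.filter_congr fun e _ => ?_) fun _ _ => rfl
  simp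

lemma Fs_in_union (A B : Finset V) (hdisj : Disjoint A B) :
    Fs E x Aᶜ A + Fs E x Bᶜ B
      = Fs E x A B + Fs E x B A + Fs E x (A ∪ B)ᶜ (A ∪ B) := by
  have hBA : B ⊆ Aᶜ := fun v hv => Finset.mem_compl.2 (Finset.disjoint_right.1 hdisj hv)
  have hAB : A ⊆ Bᶜ := fun v hv => Finset.mem_compl.2 (Finset.disjoint_left.1 hdisj hv)
  have h1 : Fs E x Aᶜ A = Fs E x B A + Fs E x (A ∪ B)ᶜ A := by
    rw [Fs_split_left E x Aᶜ A B, Finset.inter_eq_right.2 hBA,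
      sdiff_eq, Finset.compl_union, Finset.inf_eq_inter]
  have h2 : Fs E x Bᶜ B = Fs E x A B + Fs E x (A ∪ B)ᶜ B := by
    rw [Fs_split_left E x Bᶜ B A, Finset.inter_eq_right.2 hAB,
      sdiff_eq, Finset.inf_eq_inter, Finset.compl_union, Finset.inter_comm]
  have h3 : Fs E x (A ∪ B)ᶜ (A ∪ B) = Fs E x (A ∪ B)ᶜ A + Fs E x (A ∪ B)ᶜ B := by
    rw [Fs_split_right E x (A ∪ B)ᶜ (A ∪ B) A, Finset.union_inter_cancel_left,
      Finset.union_sdiff_cancel_left hdisj]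
  rw [h1, h2, h3]
  ring

end helpers

/-- Let `L` be a laminar family of tight sets of a strictly positive circulation `x` on a
strongly connected digraph satisfying the subtour elimination constraints, `S ∈ L`, and
`Si` a strongly connected component of `G[S]` (namely, the strongly connected component of
a vertex `u ∈ S` in the subgraph induced by `S`). Then `L ∪ {Si}` is laminar: every
`R ∈ L` satisfies `R ⊆ Si`, `Si ⊆ R`, or `R ∩ Si = ∅`. -/
theorem scc_laminar [DecidableEq V] [Fintype V] (E : Finset (V × V)) (x : V × V → ℝ)
    (hpos : ∀ e ∈ E, 0 < x e)
    (hcirc : ∀ v : V, ∑ e ∈ E.filter (fun e => e.1 = v), x e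
        = ∑ e ∈ E.filter (fun e => e.2 = v), x e)
    (hstrong : ∀ a b : V, Relation.ReflTransGen (fun p q => (p, q) ∈ E) a b)
    (hsubtour : ∀ R : Finset V, R.Nonempty → R ≠ Finset.univ →
      2 ≤ (∑ e ∈ dIn E R, x e) + (∑ e ∈ dOut E R, x e))
    (L : Finset (Finset V))
    (hlam : ∀ A ∈ L, ∀ B ∈ L, A ⊆ B ∨ B ⊆ A ∨ A ∩ B = ∅)
    (htightL : ∀ R ∈ L, (∑ e ∈ dIn E R, x e) = 1 ∧ (∑ e ∈ dOut E R, x e) = 1)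
    (S : Finset V) (hSL : S ∈ L)
    (u : V) (hu : u ∈ S) (Si : Finset V)
    (hSi : ∀ v : V, v ∈ Si ↔ v ∈ S ∧
      Relation.ReflTransGen (fun a b => (a, b) ∈ E ∧ a ∈ S ∧ b ∈ S) u v ∧
      Relation.ReflTransGen (fun a b => (a, b) ∈ E ∧ a ∈ S ∧ b ∈ S) v u) :
    ∀ R ∈ L, R ⊆ Si ∨ Si ⊆ R ∨ R ∩ Si = ∅ := by
  classical
  intro R hR
  by_contra hcon
  push_neg at hcon
  obtain ⟨hRS, hSR, hRSi⟩ := hcon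
  replace hRSi := Finset.nonempty_iff_ne_empty.1 hRSi
  have hSiS : Si ⊆ S := fun v hv => ((hSi v).1 hv).1
  have hne_univ : ∀ {T : Finset V} {v : V}, v ∉ T → T ≠ Finset.univ := by
    intro T v hv heq
    exact hv (heq ▸ Finset.mem_univ v)
  have hRsubS : R ⊆ S := by
    rcases hlam R hR S hSL with h | h | h
    · exact h
    · exact absurd (hSiS.trans h) hSR
    · exfalso
      apply hRSi
      apply Finset.eq_empty_of_forall_notMem
      intro v hv
      have hv' := Finset.mem_inter.1 hv
      have hmem : v ∈ R ∩ S := Finset.mem_inter.2 ⟨hv'.1, hSiS hv'.2⟩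
      rw [h] at hmem
      exact absurd hmem (Finset.notMem_empty v)
  -- reachability sets
  set W : Finset V := S.filter
    (fun v => Relation.ReflTransGen (fun a b => (a, b) ∈ E ∧ a ∈ S ∧ b ∈ S) v u) with hWdef
  set M : Finset V := S.filter
    (fun v => Relation.ReflTransGen (fun a b => (a, b) ∈ E ∧ a ∈ S ∧ b ∈ S) u v) with hMdef
  have hSiW : ∀ v ∈ Si, v ∈ W := fun v hv =>
    Finset.mem_filter.2 ⟨((hSi v).1 hv).1, ((hSi v).1 hv).2.2⟩
  have hSiM : ∀ v ∈ Si, v ∈ M := fun v hv =>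
    Finset.mem_filter.2 ⟨((hSi v).1 hv).1, ((hSi v).1 hv).2.1⟩
  have hWM : ∀ v, v ∈ W → v ∈ M → v ∈ Si := fun v h1 h2 =>
    (hSi v).2 ⟨(Finset.mem_filter.1 h1).1, (Finset.mem_filter.1 h2).2,
      (Finset.mem_filter.1 h1).2⟩
  have zW : ∀ e ∈ E, e.1 ∈ S → e.2 ∈ W → e.1 ∈ W := by
    intro e he h1 h2
    have h2' := Finset.mem_filter.1 h2
    exact Finset.mem_filter.2 ⟨h1,
      Relation.ReflTransGen.head ⟨by simpa using he, h1, h2'.1⟩ h2'.2⟩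
  have zM : ∀ e ∈ E, e.1 ∈ M → e.2 ∈ S → e.2 ∈ M := by
    intro e he h1 h2
    have h1' := Finset.mem_filter.1 h1
    exact Finset.mem_filter.2 ⟨h2, h1'.2.tail ⟨by simpa using he, h1'.1, h2⟩⟩
  -- crossing edges within Si
  have key : ∀ (X : Finset V) (cc : V), cc ∈ Si → cc ∉ X →
      ∀ aa : V, Relation.ReflTransGen (fun a b => (a, b) ∈ E ∧ a ∈ S ∧ b ∈ S) aa cc →
      aa ∈ Si → aa ∈ X →
      ∃ e ∈ E, (e.1 ∈ Si ∧ e.1 ∈ X) ∧ (e.2 ∈ Si ∧ e.2 ∉ X) := by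
    intro X cc hccSi hccX aa hreach
    induction hreach using Relation.ReflTransGen.head_induction_on with
    | refl => exact fun _ h => absurd h hccX
    | head hstep htail ih =>
      rename_i a' b'
      intro haSi' haX'
      have hb'Si : b' ∈ Si := by
        refine (hSi b').2 ⟨hstep.2.2, ?_, ?_⟩
        · exact (((hSi a').1 haSi').2.1).tail hstep
        · exact htail.trans (((hSi cc).1 hccSi).2.2)
      by_cases hbX : b' ∈ X
      · exact ih hb'Si hbX
      · exact ⟨(a', b'), hstep.1, ⟨haSi', haX'⟩, hb'Si, hbX⟩
  -- subtour + conservation : at least one unit enters every nonempty proper set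
  have inGe : ∀ T : Finset V, T.Nonempty → T ≠ Finset.univ → 1 ≤ Fs E x Tᶜ T := by
    intro T h1 h2
    have h3 := hsubtour T h1 h2
    rw [dIn_sum, dOut_sum] at h3
    have h4 := Fs_conserv E x hcirc T
    linarith
  have htR := htightL R hR
  rw [dIn_sum, dOut_sum] at htR
  obtain ⟨htRin, htRout⟩ := htR
  -- the blocks
  set A : Finset V := R ∩ Si with hAdef
  set Bf : Finset V := R \ Si with hBdef
  set C : Finset V := Si \ R with hCdef
  obtain ⟨a, haA⟩ := Finset.nonempty_iff_ne_empty.2 hRSi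
  have haR : a ∈ R := (Finset.mem_inter.1 haA).1
  have haSi : a ∈ Si := (Finset.mem_inter.1 haA).2
  obtain ⟨c, hcSi, hcR⟩ := Finset.not_subset.1 hSR
  obtain ⟨b, hbR, hbSi⟩ := Finset.not_subset.1 hRS
  have hbB : b ∈ Bf := Finset.mem_sdiff.2 ⟨hbR, hbSi⟩
  have hcC : c ∈ C := Finset.mem_sdiff.2 ⟨hcSi, hcR⟩
  -- positive crossing edges A → C and C → A
  obtain ⟨e1, he1, ⟨h11Si, h11X⟩, h12Si, h12X⟩ :=
    key R c hcSi hcR a ((((hSi a).1 haSi).2.2).trans (((hSi c).1 hcSi).2.1)) haSi haR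
  have hα : 0 < Fs E x A C := Fs_pos E x hpos ⟨e1, he1,
    Finset.mem_inter.2 ⟨h11X, h11Si⟩, Finset.mem_sdiff.2 ⟨h12Si, h12X⟩⟩
  obtain ⟨e2, he2, ⟨h21Si, h21X⟩, h22Si, h22X⟩ :=
    key Rᶜ a haSi (by simp [haR]) c
      ((((hSi c).1 hcSi).2.2).trans (((hSi a).1 haSi).2.1)) hcSi (Finset.mem_compl.2 hcR)
  have hγ : 0 < Fs E x C A := Fs_pos E x hpos ⟨e2, he2,
    Finset.mem_sdiff.2 ⟨h21Si, Finset.mem_compl.1 h21X⟩,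
    Finset.mem_inter.2 ⟨by simpa using h22X, h22Si⟩⟩
  -- basic set relations
  have hdisjAB : Disjoint A Bf := by
    rw [Finset.disjoint_left]
    intro v hv hv2
    exact (Finset.mem_sdiff.1 hv2).2 (Finset.mem_inter.1 hv).2
  have hABR : A ∪ Bf = R := by
    rw [hAdef, hBdef]
    ext v
    simp only [Finset.mem_union, Finset.mem_inter, Finset.mem_sdiff]
    tauto
  have hCRc : C ⊆ Rᶜ := fun v hv => Finset.mem_compl.2 (Finset.mem_sdiff.1 hv).2
  -- (★)  1 ≤ F(A→Bf) + F(Bf→A)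
  have hstar : 1 ≤ Fs E x A Bf + Fs E x Bf A := by
    have hid := Fs_in_union E x A Bf hdisjAB
    rw [hABR] at hid
    have h1 : 1 ≤ Fs E x Aᶜ A :=
      inGe A ⟨a, haA⟩ (hne_univ (show c ∉ A from fun h => hcR (Finset.mem_inter.1 h).1))
    have h2 : 1 ≤ Fs E x Bfᶜ Bf :=
      inGe Bf ⟨b, hbB⟩ (hne_univ (show a ∉ Bf from fun h => (Finset.mem_sdiff.1 h).2 haSi))
    linarith
  set BQ : Finset V := Bf ∩ M with hBQdef
  set BP : Finset V := Bf ∩ W with hBPdef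
  have hBQBf : BQ ⊆ Bf := Finset.inter_subset_left
  have hBPBf : BP ⊆ Bf := Finset.inter_subset_left
  have hBfR : Bf ⊆ R := fun v hv => (Finset.mem_sdiff.1 hv).1
  have hBQR : BQ ⊆ R := hBQBf.trans hBfR
  have hBPR : BP ⊆ R := hBPBf.trans hBfR
  -- A → Bf goes only into BQ ; Bf → A only from BP
  have hABQ : Fs E x A Bf = Fs E x A BQ := by
    rw [Fs_split_right E x A Bf M, ← hBQdef]
    have hz : Fs E x A (Bf \ M) = 0 := by
      apply Fs_zero
      intro e he h1 h2
      have h1Si : e.1 ∈ Si := (Finset.mem_inter.1 h1).2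
      have h2' := Finset.mem_sdiff.1 h2
      exact h2'.2 (zM e he (hSiM _ h1Si) (hRsubS (hBfR h2'.1)))
    rw [hz, add_zero]
  have hBfA : Fs E x Bf A = Fs E x BP A := by
    rw [Fs_split_left E x Bf A W, ← hBPdef]
    have hz : Fs E x (Bf \ W) A = 0 := by
      apply Fs_zero
      intro e he h1 h2
      have h1' := Finset.mem_sdiff.1 h1
      exact h1'.2 (zW e he (hRsubS (hBfR h1'.1)) (hSiW _ (Finset.mem_inter.1 h2).2))
    rw [hz, add_zero]
  -- upper bound on F(A→BQ)
  have hupper : Fs E x A BQ ≤ 1 - Fs E x A C := by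
    have m1 : Fs E x A BQ ≤ Fs E x BQᶜ BQ := by
      apply Fs_mono E x hpos _ (subset_refl _)
      intro v hv
      exact Finset.mem_compl.2 (fun h =>
        (Finset.mem_sdiff.1 (hBQBf h)).2 (Finset.mem_inter.1 hv).2)
    have m2 : Fs E x BQᶜ BQ = Fs E x BQ BQᶜ := Fs_conserv E x hcirc BQ
    have m3 : Fs E x BQ BQᶜ = Fs E x BQ Rᶜ + Fs E x BQ (R \ BQ) := by
      rw [Fs_split_right E x BQ BQᶜ Rᶜ]
      congr 2
      · exact Finset.inter_eq_right.2 (Finset.compl_subset_compl.2 hBQR)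
      · ext v
        simp only [Finset.mem_sdiff, Finset.mem_compl, not_not]
        tauto
    have m4 : Fs E x BQ (R \ BQ) = 0 := by
      apply Fs_zero
      intro e he h1 h2
      have h1B : e.1 ∈ Bf := (Finset.mem_inter.1 h1).1
      have h1M : e.1 ∈ M := (Finset.mem_inter.1 h1).2
      have h2' := Finset.mem_sdiff.1 h2
      have h2S : e.2 ∈ S := hRsubS h2'.1
      have h2M : e.2 ∈ M := zM e he h1M h2S
      by_cases h2Si : e.2 ∈ Si
      · have h1W : e.1 ∈ W := zW e he (hRsubS (hBfR h1B)) (hSiW _ h2Si)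
        exact (Finset.mem_sdiff.1 h1B).2 (hWM _ h1W h1M)
      · exact h2'.2 (Finset.mem_inter.2 ⟨Finset.mem_sdiff.2 ⟨h2'.1, h2Si⟩, h2M⟩)
    have s1 : Fs E x R Rᶜ = Fs E x A Rᶜ + Fs E x Bf Rᶜ := by
      rw [Fs_split_left E x R Rᶜ Si, ← hAdef, ← hBdef]
    have s2 : Fs E x A C ≤ Fs E x A Rᶜ := Fs_mono E x hpos (subset_refl _) hCRc
    have s3 : Fs E x BQ Rᶜ ≤ Fs E x Bf Rᶜ := Fs_mono E x hpos hBQBf (subset_refl _)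
    have hBfnn : 0 ≤ Fs E x Bf Rᶜ := Fs_nonneg E x hpos _ _
    linarith
  have hBPApos : 0 < Fs E x BP A := by
    rw [hABQ, hBfA] at hstar
    linarith
  have hBPne : BP.Nonempty := by
    rw [Finset.nonempty_iff_ne_empty]
    intro h
    have hz : Fs E x BP A = 0 := by
      apply Fs_zero
      intro e he h1 _
      rw [h] at h1
      exact absurd h1 (Finset.notMem_empty _)
    linarith
  have h_inBP : 1 ≤ Fs E x BPᶜ BP :=
    inGe BP hBPne (hne_univ (show a ∉ BP from fun h => (Finset.mem_sdiff.1 (hBPBf h)).2 haSi))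
  have n3 : Fs E x BPᶜ BP = Fs E x Rᶜ BP + Fs E x (R \ BP) BP := by
    rw [Fs_split_left E x BPᶜ BP Rᶜ]
    congr 2
    · exact Finset.inter_eq_right.2 (Finset.compl_subset_compl.2 hBPR)
    · ext v
      simp only [Finset.mem_sdiff, Finset.mem_compl, not_not]
      tauto
  have n4 : Fs E x (R \ BP) BP = 0 := by
    apply Fs_zero
    intro e he h1 h2
    have h2B : e.2 ∈ Bf := (Finset.mem_inter.1 h2).1
    have h2W : e.2 ∈ W := (Finset.mem_inter.1 h2).2
    have h1' := Finset.mem_sdiff.1 h1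
    have h1S : e.1 ∈ S := hRsubS h1'.1
    have h1W : e.1 ∈ W := zW e he h1S h2W
    by_cases h1Si : e.1 ∈ Si
    · have h2M : e.2 ∈ M := zM e he (hSiM _ h1Si) (hRsubS (hBfR h2B))
      exact (Finset.mem_sdiff.1 h2B).2 (hWM _ h2W h2M)
    · exact h1'.2 (Finset.mem_inter.2 ⟨Finset.mem_sdiff.2 ⟨h1'.1, h1Si⟩, h1W⟩)
  -- final contradiction
  have f1 : Fs E x Rᶜ R = Fs E x Rᶜ A + Fs E x Rᶜ Bf := by
    rw [Fs_split_right E x Rᶜ R Si, ← hAdef, ← hBdef]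
  have f2 : Fs E x C A ≤ Fs E x Rᶜ A := Fs_mono E x hpos hCRc (subset_refl _)
  have f3 : Fs E x Rᶜ BP ≤ Fs E x Rᶜ Bf := Fs_mono E x hpos (subset_refl _) hBPBf
  linarith
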